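/- Let x₀ ∈ (0,1) and R ∈ (0,1] satisfy (x₀ − 4R, x₀ + 4R) ⊆ (0,1), and let G ⊆ (x₀ − R, x₀ + R) be a Lebesgue measurable set with |G| > 0. Then there exists a constant C > 0 such that for every λ > 0 and every finitely supported sequence (a_j)_{j≥1} of real numbers, the function f(x) := Σ_{j ≥ 1, j²π² ≤ λ} a_j sin(jπx) satisfies ∫_0^1 f(x)² dx ≤ C e^{C λ^{1/2}} ∫_G f(x)² dx. -/

import Mathlib

open MeasureTheory Real

-- Point selection lemma
lemma pick_points (E : Set ℝ) (hE : MeasurableSet E) (hEsub : E ⊆ Set.Ioo (0:ℝ) 1)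
    (μ : ℝ) (hμ : 0 < μ) (hvol : ENNReal.ofReal μ ≤ volume E) (n : ℕ) (hn : 0 < n) :
    ∃ t : ℕ → ℝ, (∀ i, i < n → t i ∈ E) ∧
      ∀ i j, i < j → j < n → (j - i : ℝ) * (μ / (2 * n)) ≤ t j - t i := by
  have hEfin : volume E ≠ ⊤ := by
    refine ne_top_of_le_ne_top ?_ (measure_mono hEsub)
    simp [Real.volume_Ioo]
  set F : ℝ → ℝ := fun t => (volume (E ∩ Set.Iic t)).toReal with hF
  have hfin : ∀ s : Set ℝ, volume (E ∩ s) ≠ ⊤ := fun s =>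
    ne_top_of_le_ne_top hEfin (measure_mono Set.inter_subset_left)
  have hFadd : ∀ a b : ℝ, a ≤ b → F b = F a + (volume (E ∩ Set.Ioc a b)).toReal := by
    intro a b hab
    have : E ∩ Set.Iic b = (E ∩ Set.Iic a) ∪ (E ∩ Set.Ioc a b) := by
      rw [← Set.inter_union_distrib_left, Set.Iic_union_Ioc_eq_Iic hab]
    rw [hF]
    simp only []
    rw [this, measure_union _ (hE.inter measurableSet_Ioc)]
    · rw [ENNReal.toReal_add (hfin _) (hfin _)]
    · exact (Set.disjoint_of_subset Set.inter_subset_right Set.inter_subset_right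
        (Set.Iic_disjoint_Ioc le_rfl))
  have hFmono : Monotone F := by
    intro a b hab
    rw [hFadd a b hab]
    have := ENNReal.toReal_nonneg (a := volume (E ∩ Set.Ioc a b))
    linarith
  have hFlip : ∀ a b : ℝ, a ≤ b → F b - F a ≤ b - a := by
    intro a b hab
    rw [hFadd a b hab]
    have h1 : (volume (E ∩ Set.Ioc a b)).toReal ≤ (volume (Set.Ioc a b)).toReal := by
      apply ENNReal.toReal_mono (by simp [Real.volume_Ioc])
      exact measure_mono Set.inter_subset_right
    simp [Real.volume_Ioc] at h1
    have : (volume (E ∩ Set.Ioc a b)).toReal ≤ b - a := by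
      refine h1.trans ?_
      rw [ENNReal.toReal_ofReal_eq_iff.mpr (by linarith)]
    linarith
  have hFcont : Continuous F := by
    have : LipschitzWith 1 F := by
      apply LipschitzWith.of_dist_le_mul
      intro a b
      rw [Real.dist_eq, Real.dist_eq]
      simp only [NNReal.coe_one, one_mul]
      rcases le_total a b with hab | hab
      · have h1 := hFlip a b hab
        have h2 := hFmono hab
        rw [abs_of_nonpos (by linarith : F a - F b ≤ 0), abs_of_nonpos (by linarith : a - b ≤ 0)]
        linarith
      · have h1 := hFlip b a hab
        have h2 := hFmono hab
        rw [abs_of_nonneg (by linarith : (0:ℝ) ≤ F a - F b), abs_of_nonneg (by linarith : (0:ℝ) ≤ a - b)]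
        linarith
    exact this.continuous
  have hF0 : F 0 = 0 := by
    have : E ∩ Set.Iic (0:ℝ) = ∅ := by
      ext x; simp only [Set.mem_inter_iff, Set.mem_Iic, Set.mem_empty_iff_false, iff_false]
      rintro ⟨hx, hx0⟩; exact absurd (hEsub hx).1 (by linarith)
    simp [hF, this]
  have hF1 : μ ≤ F 1 := by
    have h1 : E ∩ Set.Iic (1:ℝ) = E := by
      apply Set.inter_eq_left.mpr
      intro x hx; exact le_of_lt (hEsub hx).2
    have h2 := ENNReal.toReal_mono hEfin hvol
    rw [ENNReal.toReal_ofReal hμ.le] at h2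
    show μ ≤ (volume (E ∩ Set.Iic 1)).toReal
    rwa [h1]
  set h : ℝ := μ / (2 * n) with hhdef
  have hh : 0 < h := by positivity
  have key : ∀ i : ℕ, ∃ t : ℝ, i < n → t ∈ E ∧
      2 * i * h + h / 4 ≤ F t ∧ F t ≤ 2 * i * h + 3 * h / 4 := by
    intro i
    by_cases hi : i < n
    swap
    · exact ⟨0, fun hc => absurd hc hi⟩
    have hβμ : 2 * (i:ℝ) * h + 3 * h / 4 ≤ μ := by
      have : (i:ℝ) ≤ (n:ℝ) - 1 := by
        have : (i:ℝ) + 1 ≤ n := by exact_mod_cast hi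
        linarith
      have hμh : μ = 2 * n * h := by
        rw [hhdef]; field_simp
      rw [hμh]; nlinarith
    have hIVT := intermediate_value_Icc (by norm_num : (0:ℝ) ≤ 1) (hFcont.continuousOn)
    have hp : ∃ p ∈ Set.Icc (0:ℝ) 1, F p = 2 * i * h + h / 4 := by
      have : (2 * (i:ℝ) * h + h / 4) ∈ Set.Icc (F 0) (F 1) := by
        constructor
        · rw [hF0]; positivity
        · linarith
      obtain ⟨p, hp1, hp2⟩ := hIVT this
      exact ⟨p, hp1, hp2⟩
    have hq : ∃ q ∈ Set.Icc (0:ℝ) 1, F q = 2 * i * h + 3 * h / 4 := by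
      have : (2 * (i:ℝ) * h + 3 * h / 4) ∈ Set.Icc (F 0) (F 1) := by
        constructor
        · rw [hF0]; positivity
        · linarith
      obtain ⟨q, hq1, hq2⟩ := hIVT this
      exact ⟨q, hq1, hq2⟩
    obtain ⟨p, hp1, hp2⟩ := hp
    obtain ⟨q, hq1, hq2⟩ := hq
    have hpq : p ≤ q := by
      by_contra hc
      push_neg at hc
      have := hFmono hc.le
      rw [hp2, hq2] at this
      linarith
    have hne : (E ∩ Set.Ioc p q).Nonempty := by
      apply MeasureTheory.nonempty_of_measure_ne_zero (μ := volume)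
      intro hzero
      have := hFadd p q hpq
      rw [hp2, hq2, hzero] at this
      simp at this
      linarith
    obtain ⟨t, htE, htpq⟩ := hne
    refine ⟨t, fun _ => ⟨htE, ?_, ?_⟩⟩
    · rw [← hp2]; exact hFmono htpq.1.le
    · rw [← hq2]; exact hFmono htpq.2
  choose t ht using key
  refine ⟨t, fun i hi => (ht i hi).1, ?_⟩
  intro i j hij hj
  have hi : i < n := lt_trans hij hj
  obtain ⟨-, hαi, hβi⟩ := ht i hi
  obtain ⟨-, hαj, hβj⟩ := ht j hj
  have hji : (i:ℝ) + 1 ≤ (j:ℝ) := by exact_mod_cast hij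
  have hFdiff : ((j:ℝ) - i) * h + h / 2 ≤ F (t j) - F (t i) := by
    have hmul : 1 * h ≤ ((j:ℝ) - i) * h :=
      mul_le_mul_of_nonneg_right (by linarith) hh.le
    linarith
  have htij : t i ≤ t j := by
    by_contra hc
    push_neg at hc
    have := hFmono hc.le
    have hpos : 0 < ((j:ℝ) - i) * h := mul_pos (by linarith) hh
    linarith
  have := hFlip (t i) (t j) htij
  have hgoal : ((j:ℝ) - i) * h ≤ t j - t i := by linarith
  exact hgoal

lemma prod_dist_eq (n i : ℕ) (hi : i < n) :
    ∏ j ∈ (Finset.range n).erase i, |(i:ℝ) - j| =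
      ((i.factorial * (n-1-i).factorial : ℕ) : ℝ) := by
  have hsplit : (Finset.range n).erase i = Finset.range i ∪ Finset.Ico (i+1) n := by
    ext x
    simp only [Finset.mem_erase, Finset.mem_range, Finset.mem_union, Finset.mem_Ico]
    omega
  have hdisj : Disjoint (Finset.range i) (Finset.Ico (i+1) n) := by
    rw [Finset.disjoint_left]
    intro x hx hx'
    simp only [Finset.mem_range] at hx
    simp only [Finset.mem_Ico] at hx'
    omega
  rw [hsplit, Finset.prod_union hdisj]
  have h1 : ∏ j ∈ Finset.range i, |(i:ℝ) - j| = (i.factorial : ℝ) := by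
    have e1 : ∏ j ∈ Finset.range i, |(i:ℝ) - j| = ((∏ j ∈ Finset.range i, (i - j) : ℕ) : ℝ) := by
      rw [Nat.cast_prod]
      apply Finset.prod_congr rfl
      intro j hj
      simp only [Finset.mem_range] at hj
      rw [Nat.cast_sub hj.le, abs_of_pos (by
        have : (j:ℝ) < i := by exact_mod_cast hj
        linarith)]
    rw [e1]
    congr 1
    rw [← Finset.prod_range_reflect, ← Finset.prod_range_add_one_eq_factorial]
    apply Finset.prod_congr rfl
    intro j hj
    simp only [Finset.mem_range] at hj
    omega
  have h2 : ∏ j ∈ Finset.Ico (i+1) n, |(i:ℝ) - j| = ((n-1-i).factorial : ℝ) := by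
    have e1 : ∏ j ∈ Finset.Ico (i+1) n, |(i:ℝ) - j| =
        ((∏ j ∈ Finset.Ico (i+1) n, (j - i) : ℕ) : ℝ) := by
      rw [Nat.cast_prod]
      apply Finset.prod_congr rfl
      intro j hj
      simp only [Finset.mem_Ico] at hj
      have hij : i < j := by omega
      rw [Nat.cast_sub hij.le, abs_sub_comm, abs_of_pos (by
        have : (i:ℝ) < j := by exact_mod_cast hij
        linarith)]
    rw [e1]
    congr 1
    rw [Finset.prod_Ico_eq_prod_range, show n - (i+1) = n - 1 - i by omega,
      ← Finset.prod_range_add_one_eq_factorial]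
    apply Finset.prod_congr rfl
    intro j hj
    omega
  rw [h1, h2, Nat.cast_mul]

lemma prod_dist_ge (n i : ℕ) (hi : i < n) :
    ((n-1).factorial : ℝ) / 2^(n-1) ≤ ∏ j ∈ (Finset.range n).erase i, |(i:ℝ) - j| := by
  rw [prod_dist_eq n i hi]
  rw [div_le_iff₀ (by positivity)]
  have hnat : (n-1).factorial ≤ i.factorial * (n-1-i).factorial * 2^(n-1) := by
    have hle : i ≤ n - 1 := by omega
    have hc := Nat.choose_mul_factorial_mul_factorial hle
    have hcb : (n-1).choose i ≤ 2^(n-1) := by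
      rw [← Nat.sum_range_choose (n-1)]
      exact Finset.single_le_sum (f := fun m => (n-1).choose m) (fun _ _ => Nat.zero_le _)
        (Finset.mem_range.mpr (by omega))
    calc (n-1).factorial = (n-1).choose i * i.factorial * (n-1-i).factorial := hc.symm
    _ ≤ 2^(n-1) * i.factorial * (n-1-i).factorial := by
        exact Nat.mul_le_mul_right _ (Nat.mul_le_mul_right _ hcb)
    _ = i.factorial * (n-1-i).factorial * 2^(n-1) := by ring
  calc ((n-1).factorial : ℝ) ≤ ((i.factorial * (n-1-i).factorial * 2^(n-1) : ℕ) : ℝ) := by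
        exact_mod_cast hnat
  _ = ((i.factorial * (n-1-i).factorial : ℕ) : ℝ) * 2^(n-1) := by push_cast; ring

lemma two_I_sin (z : ℂ) :
    Complex.exp (z*Complex.I) - Complex.exp (-z*Complex.I) = 2 * Complex.I * Complex.sin z := by
  rw [Complex.sin]
  linear_combination (Complex.exp (z*Complex.I) - Complex.exp (-z*Complex.I)) * Complex.I_sq

lemma chord_lb (a b : ℝ) (h0 : 0 ≤ b - a) (h1 : b - a ≤ 1) :
    2 * (b - a) ≤
      ‖Complex.exp ((π * b : ℝ) * Complex.I) - Complex.exp ((π * a : ℝ) * Complex.I)‖ := by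
  set θ : ℝ := π * (b - a) / 2 with hθ
  have key : Complex.exp ((π * b : ℝ) * Complex.I) - Complex.exp ((π * a : ℝ) * Complex.I)
      = Complex.exp ((π*(a+b)/2 : ℝ) * Complex.I) * (2 * Complex.I * Complex.sin (θ:ℂ)) := by
    rw [← two_I_sin (θ:ℂ), mul_sub, ← Complex.exp_add, ← Complex.exp_add]
    congr 2 <;> · push_cast [hθ]; ring
  rw [key, norm_mul, Complex.norm_exp_ofReal_mul_I, one_mul, norm_mul, norm_mul]
  have hsinθ : ‖Complex.sin (θ:ℂ)‖ = |Real.sin θ| := by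
    rw [← Complex.ofReal_sin, Complex.norm_real, Real.norm_eq_abs]
  rw [hsinθ]
  simp only [Complex.norm_two, Complex.norm_I, mul_one]
  have hθ0 : 0 ≤ θ := by rw [hθ]; positivity
  have hθpi : θ ≤ π / 2 := by
    rw [hθ]
    have := Real.pi_pos
    rw [div_le_div_iff₀ (by norm_num) (by norm_num)]
    nlinarith
  have := Real.mul_le_sin hθ0 hθpi
  have hsin0 : 0 ≤ Real.sin θ := Real.sin_nonneg_of_nonneg_of_le_pi hθ0 (by linarith [Real.pi_pos])
  rw [abs_of_nonneg hsin0]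
  have hπ : 2 / π * θ = b - a := by
    rw [hθ]; field_simp
  nlinarith [Real.pi_pos]

lemma pow_le_exp_factorial (n : ℕ) : (n:ℝ)^n ≤ Real.exp n * n.factorial := by
  have h := Real.sum_le_exp_of_nonneg (x := (n:ℝ)) (n.cast_nonneg) (n+1)
  have hterm : (n:ℝ)^n / n.factorial ≤ ∑ i ∈ Finset.range (n+1), (n:ℝ)^i / i.factorial :=
    Finset.single_le_sum (f := fun i => (n:ℝ)^i / (i.factorial:ℝ)) (fun i _ => by positivity) (Finset.mem_range.mpr (Nat.lt_succ_self n))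
  have h2 := hterm.trans h
  rw [div_le_iff₀ (by positivity)] at h2
  linarith

lemma pow_le_exp_factorial' (n : ℕ) : (n:ℝ)^n ≤ Real.exp n * n.factorial := by
  have h := Real.sum_le_exp_of_nonneg (x := (n:ℝ)) (n.cast_nonneg) (n+1)
  have hterm : (n:ℝ)^n / n.factorial ≤ ∑ i ∈ Finset.range (n+1), (n:ℝ)^i / i.factorial :=
    Finset.single_le_sum (f := fun i => (n:ℝ)^i / (i.factorial:ℝ)) (fun i _ => by positivity)
      (Finset.mem_range.mpr (Nat.lt_succ_self n))
  have h2 := hterm.trans h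
  rw [div_le_iff₀ (by positivity)] at h2
  linarith

lemma hmaster (n : ℕ) (hn : 0 < n) : (n:ℝ)^n ≤ (Real.exp 2)^n * (n-1).factorial := by
  have h1 := pow_le_exp_factorial' n
  have h2 : (n.factorial : ℝ) = n * (n-1).factorial := by
    rw [← Nat.mul_factorial_pred hn.ne']; push_cast; ring
  have h3 : (n:ℝ) ≤ Real.exp n := by
    have := Real.add_one_le_exp (n:ℝ)
    linarith
  have h4 : Real.exp n * Real.exp n = (Real.exp 2)^n := by
    rw [← Real.exp_add, ← Real.exp_nat_mul]
    congr 1; ring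
  calc (n:ℝ)^n ≤ Real.exp n * n.factorial := h1
  _ = Real.exp n * n * (n-1).factorial := by rw [h2]; ring
  _ ≤ Real.exp n * Real.exp n * (n-1).factorial := by
      exact mul_le_mul_of_nonneg_right (mul_le_mul_of_nonneg_left h3 (Real.exp_pos _).le)
        (by positivity)
  _ = (Real.exp 2)^n * (n-1).factorial := by rw [h4]

lemma D_le (m' : ℝ) (hm0 : 0 < m') (hm1 : m' ≤ 1) (n : ℕ) (hn : 0 < n) :
    (n:ℝ) * (2^(n-1) / ((m'/(4*n))^(n-1) * (n-1).factorial)) ≤ (8*Real.exp 2/m')^n := by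
  obtain ⟨k, rfl⟩ : ∃ k, n = k+1 := ⟨n-1, (Nat.succ_pred_eq_of_pos hn).symm⟩
  simp only [Nat.add_sub_cancel]
  have hk1 : (0:ℝ) < (k:ℝ)+1 := by positivity
  have hfac : (0:ℝ) < (k.factorial : ℝ) := by positivity
  have he2 : (0:ℝ) < Real.exp 2 := Real.exp_pos 2
  push_cast
  have hbase : (8*Real.exp 2/m') * (m'/(4*((k:ℝ)+1))) = 2*Real.exp 2/((k:ℝ)+1) := by
    field_simp; ring
  have hId : (8*Real.exp 2/m')^(k+1) * ((m'/(4*((k:ℝ)+1)))^k * k.factorial)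
      = ((8*Real.exp 2/m') * (2*Real.exp 2)^k * k.factorial) / ((k:ℝ)+1)^k := by
    calc (8*Real.exp 2/m')^(k+1) * ((m'/(4*((k:ℝ)+1)))^k * k.factorial)
        = (8*Real.exp 2/m') * (((8*Real.exp 2/m') * (m'/(4*((k:ℝ)+1))))^k * k.factorial) := by
          rw [mul_pow, pow_succ']; ring
    _ = (8*Real.exp 2/m') * ((2*Real.exp 2/((k:ℝ)+1))^k * k.factorial) := by rw [hbase]
    _ = ((8*Real.exp 2/m') * (2*Real.exp 2)^k * k.factorial) / ((k:ℝ)+1)^k := by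
          rw [div_pow]; ring
  have h6 : ((k:ℝ)+1) * 2^k * ((k:ℝ)+1)^k ≤ (8*Real.exp 2/m') * (2*Real.exp 2)^k * k.factorial := by
    have hm := hmaster (k+1) (Nat.succ_pos k)
    simp only [Nat.add_sub_cancel] at hm
    push_cast at hm
    have hcoef : Real.exp 2 ≤ 8*Real.exp 2/m' := by
      rw [le_div_iff₀ hm0]
      nlinarith
    calc ((k:ℝ)+1) * 2^k * ((k:ℝ)+1)^k = 2^k * (((k:ℝ)+1) * ((k:ℝ)+1)^k) := by ring
    _ = 2^k * ((k:ℝ)+1)^(k+1) := by rw [← pow_succ']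
    _ ≤ 2^k * ((Real.exp 2)^(k+1) * k.factorial) := by
        apply mul_le_mul_of_nonneg_left _ (by positivity)
        exact hm
    _ = 2^k * (Real.exp 2 * ((Real.exp 2)^k * k.factorial)) := by rw [pow_succ]; ring
    _ ≤ 2^k * ((8*Real.exp 2/m') * ((Real.exp 2)^k * k.factorial)) := by
        apply mul_le_mul_of_nonneg_left _ (by positivity)
        apply mul_le_mul_of_nonneg_right hcoef (by positivity)
    _ = (8*Real.exp 2/m') * (2*Real.exp 2)^k * k.factorial := by rw [mul_pow]; ring
  have hstep : ((k:ℝ)+1) * (2^k / ((m'/(4*((k:ℝ)+1)))^k * k.factorial)) ≤ (8*Real.exp 2/m')^(k+1) := by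
    rw [mul_div_assoc', div_le_iff₀ (by positivity), hId, le_div_iff₀ (by positivity)]
    exact h6
  exact_mod_cast hstep

set_option maxHeartbeats 2000000 in
theorem stmt_10 (x₀ R : ℝ) (hx₀ : x₀ ∈ Set.Ioo (0:ℝ) 1) (hR : R ∈ Set.Ioc (0:ℝ) 1)
    (hball : Set.Ioo (x₀ - 4 * R) (x₀ + 4 * R) ⊆ Set.Ioo (0:ℝ) 1)
    (G : Set ℝ) (hG : MeasurableSet G) (hGsub : G ⊆ Set.Ioo (x₀ - R) (x₀ + R))
    (hGpos : 0 < volume G) :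
    ∃ C > 0, ∀ l > 0, ∀ a : ℕ → ℝ, (Function.support a).Finite →
      (∫ x in Set.Ioo (0:ℝ) 1,
          (∑' j : ℕ, if 1 ≤ j ∧ (j : ℝ) ^ 2 * π ^ 2 ≤ l
            then a j * Real.sin (j * π * x) else 0) ^ 2) ≤
        C * Real.exp (C * l ^ ((1:ℝ)/2)) *
          ∫ x in G,
            (∑' j : ℕ, if 1 ≤ j ∧ (j : ℝ) ^ 2 * π ^ 2 ≤ l
              then a j * Real.sin (j * π * x) else 0) ^ 2 := by
  have hπ := Real.pi_pos
  have hπ1 := Real.pi_gt_three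
  have hG01 : G ⊆ Set.Ioo (0:ℝ) 1 := by
    intro x hx
    have h1 := hGsub hx
    have hR0 := hR.1
    exact hball ⟨by cases h1; linarith, by cases h1; linarith⟩
  have hGfin : volume G ≠ ⊤ := by
    refine ne_top_of_le_ne_top ?_ (measure_mono hG01)
    simp [Real.volume_Ioo]
  set m' : ℝ := (volume G).toReal with hm'def
  have hm0 : 0 < m' := ENNReal.toReal_pos hGpos.ne' hGfin
  have hm1 : m' ≤ 1 := by
    have := ENNReal.toReal_mono (by simp [Real.volume_Ioo] : volume (Set.Ioo (0:ℝ) 1) ≠ ⊤)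
      (measure_mono hG01)
    simpa [Real.volume_Ioo] using this
  set K : ℝ := 8 * Real.exp 2 / m' with hKdef
  have hK1 : 1 < K := by
    rw [hKdef, lt_div_iff₀ hm0]
    nlinarith [Real.exp_one_lt_d9, Real.add_one_le_exp (2:ℝ), Real.exp_pos 2]
  have hK0 : 0 < K := lt_trans one_pos hK1
  have hlogK : 0 < Real.log K := Real.log_pos hK1
  set C : ℝ := 2*K^2/m' + 4*Real.log K with hCdef
  have hC0 : 0 < C := by positivity
  refine ⟨C, hC0, ?_⟩
  intro l hl a _
  set N : ℕ := ⌊Real.sqrt l / π⌋₊ with hNdef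
  set n : ℕ := 2*N+1 with hndef
  have hn0 : 0 < n := Nat.succ_pos _
  have hnR : (0:ℝ) < n := by exact_mod_cast hn0
  set g : ℝ → ℝ := fun x => ∑ j ∈ Finset.range (N+1),
    if 1 ≤ j ∧ (j:ℝ)^2*π^2 ≤ l then a j * Real.sin (j*π*x) else 0 with hgdef
  have hjN : ∀ j : ℕ, 1 ≤ j → (j:ℝ)^2*π^2 ≤ l → j ≤ N := by
    intro j hj1 hjl
    apply Nat.le_floor
    rw [le_div_iff₀ hπ]
    have h1 : ((j:ℝ)*π)^2 ≤ l := by nlinarith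
    have h2 : (0:ℝ) ≤ (j:ℝ)*π := by positivity
    calc (j:ℝ)*π = Real.sqrt (((j:ℝ)*π)^2) := (Real.sqrt_sq h2).symm
    _ ≤ Real.sqrt l := Real.sqrt_le_sqrt h1
  have htsum : ∀ x : ℝ, (∑' j : ℕ, if 1 ≤ j ∧ (j : ℝ) ^ 2 * π ^ 2 ≤ l
      then a j * Real.sin (j * π * x) else 0) = g x := by
    intro x
    apply tsum_eq_sum
    intro j hj
    rw [Finset.mem_range] at hj
    rw [if_neg]
    rintro ⟨h1, h2⟩
    exact hj (Nat.lt_succ_of_le (hjN j h1 h2))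
  simp only [htsum]
  have hgcont : Continuous g := by
    apply continuous_finset_sum
    intro j _
    by_cases hc : 1 ≤ j ∧ (j:ℝ)^2*π^2 ≤ l
    · simp only [if_pos hc]
      fun_prop
    · simp only [if_neg hc]
      exact continuous_const
  have hint : IntegrableOn (fun x => g x ^ 2) (Set.Icc (0:ℝ) 1) :=
    (hgcont.pow 2).integrableOn_Icc
  have hintIoo : IntegrableOn (fun x => g x ^ 2) (Set.Ioo (0:ℝ) 1) :=
    hint.mono_set Set.Ioo_subset_Icc_self
  have hintG : IntegrableOn (fun x => g x ^ 2) G :=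
    hint.mono_set (hG01.trans Set.Ioo_subset_Icc_self)
  set c : ℝ := 2/m' * ∫ x in G, g x ^ 2 with hcdef
  have hGint0 : 0 ≤ ∫ x in G, g x ^ 2 := setIntegral_nonneg hG (fun x _ => sq_nonneg _)
  have hc0 : 0 ≤ c := by positivity
  set S : Set ℝ := {x | g x ^ 2 ≤ c} with hSdef
  have hS : MeasurableSet S := (isClosed_le (hgcont.pow 2) continuous_const).measurableSet
  have hvolE : ENNReal.ofReal (m'/2) ≤ volume (G ∩ S) := by
    have hdiff : volume (G \ S) ≤ ENNReal.ofReal (m'/2) := by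
      rcases eq_or_lt_of_le hGint0 with h0 | hpos
      · -- integral zero case
        have hae : (fun x => g x ^ 2) =ᵐ[volume.restrict G] 0 := by
          rw [← integral_eq_zero_iff_of_nonneg (fun x => sq_nonneg (g x)) hintG]
          exact h0.symm
        have hzero : volume.restrict G {x | g x ^ 2 ≠ 0} = 0 := hae
        have hzero' : volume ({x | g x ^ 2 ≠ 0} ∩ G) = 0 := by
          rwa [Measure.restrict_apply (by
            exact (measurableSet_eq_fun (hgcont.pow 2).measurable measurable_const).compl)] at hzero
        refine le_trans (measure_mono ?_) (le_trans hzero'.le zero_le)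
        intro x hx
        have hc' : c = 0 := by rw [hcdef, ← h0]; ring
        refine ⟨?_, hx.1⟩
        simp only [Set.mem_setOf_eq]
        intro hzx
        apply hx.2
        show g x ^ 2 ≤ c
        rw [hc', hzx]
      · have hcpos : 0 < c := by positivity
        have hGSfin : volume (G \ S) ≠ ⊤ :=
          ne_top_of_le_ne_top hGfin (measure_mono Set.diff_subset)
        have hintGS : IntegrableOn (fun x => g x ^ 2) (G \ S) :=
          hintG.mono_set Set.diff_subset
        have hlow : c * (volume (G \ S)).toReal ≤ ∫ x in G \ S, g x ^ 2 := by
          have := setIntegral_mono_on (integrableOn_const (C := c) hGSfin)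
            hintGS (hG.diff hS) (fun x hx => le_of_lt (by
              have := hx.2
              simp only [hSdef, Set.mem_setOf_eq, not_le] at this
              exact this))
          rw [setIntegral_const, smul_eq_mul, mul_comm] at this; exact this
        have hup : ∫ x in G \ S, g x ^ 2 ≤ ∫ x in G, g x ^ 2 :=
          setIntegral_mono_set hintG (Filter.Eventually.of_forall (fun x => sq_nonneg _))
            (HasSubset.Subset.eventuallyLE Set.diff_subset)
        have htoReal : (volume (G \ S)).toReal ≤ m'/2 := by
          have hGi : ∫ x in G, g x ^ 2 = c * (m'/2) := by
            rw [hcdef]; field_simp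
          rw [hGi] at hup
          have := hlow.trans hup
          exact le_of_mul_le_mul_left this hcpos
        rw [← ENNReal.ofReal_toReal hGSfin]
        exact ENNReal.ofReal_le_ofReal htoReal
    have hsplit : volume G ≤ volume (G ∩ S) + volume (G \ S) :=
      le_trans (measure_mono (by
        intro x hx
        by_cases hxS : x ∈ S
        · exact Set.mem_union_left _ ⟨hx, hxS⟩
        · exact Set.mem_union_right _ ⟨hx, hxS⟩)) (measure_union_le _ _)
    have hvolG : volume G = ENNReal.ofReal m' := (ENNReal.ofReal_toReal hGfin).symm
    have h2 : ENNReal.ofReal (m'/2) + ENNReal.ofReal (m'/2) ≤ volume (G ∩ S) + ENNReal.ofReal (m'/2) := by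
      calc ENNReal.ofReal (m'/2) + ENNReal.ofReal (m'/2) = ENNReal.ofReal m' := by
            rw [← ENNReal.ofReal_add (by linarith) (by linarith)]
            congr 1; ring
      _ = volume G := hvolG.symm
      _ ≤ volume (G ∩ S) + volume (G \ S) := hsplit
      _ ≤ volume (G ∩ S) + ENNReal.ofReal (m'/2) := add_le_add le_rfl hdiff
    exact (ENNReal.add_le_add_iff_right ENNReal.ofReal_ne_top).mp h2
  obtain ⟨t, htE, hgap⟩ := pick_points (G ∩ S) (hG.inter hS)
    (fun x hx => hG01 hx.1) (m'/2) (by positivity) hvolE n hn0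
  -- node properties
  have htIoo : ∀ i, i < n → t i ∈ Set.Ioo (0:ℝ) 1 := fun i hi => hG01 (htE i hi).1
  have htc : ∀ i, i < n → g (t i) ^ 2 ≤ c := fun i hi => (htE i hi).2
  set sep : ℝ := m'/2/(2*(n:ℝ)) with hsepdef
  have hsep0 : 0 < sep := by positivity
  set v : ℕ → ℂ := fun i => Complex.exp ((π * t i : ℝ) * Complex.I) with hvdef
  have hvabs : ∀ i, ‖v i‖ = 1 := fun i => Complex.norm_exp_ofReal_mul_I _
  have hpair : ∀ i j, i < j → j < n → 2 * (sep * ((j:ℝ) - i)) ≤ ‖v j - v i‖ := by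
    intro i j hij hj
    have hgap' := hgap i j hij hj
    have hti := htIoo i (lt_trans hij hj)
    have htj := htIoo j hj
    have hji : (1:ℝ) ≤ (j:ℝ) - i := by
      have : (i:ℝ) + 1 ≤ j := by exact_mod_cast hij
      linarith
    have h0 : 0 ≤ t j - t i := le_trans (by nlinarith) hgap'
    have h1 : t j - t i ≤ 1 := by
      have := hti.1; have := htj.2; linarith
    have hch := chord_lb (t i) (t j) h0 h1
    have : 2 * (sep * ((j:ℝ) - i)) ≤ 2 * (t j - t i) := by nlinarith
    exact le_trans this hch
  have hpair' : ∀ i j, i < n → j < n → i ≠ j →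
      2 * (sep * |(i:ℝ) - (j:ℝ)|) ≤ ‖v i - v j‖ := by
    intro i j hi hj hne
    rcases lt_or_gt_of_ne hne with h | h
    · rw [abs_of_nonpos (by
        have : (i:ℝ) ≤ j := by exact_mod_cast h.le
        linarith : (i:ℝ) - j ≤ 0), ← norm_sub_rev (v j)]
      have := hpair i j h hj
      convert this using 3 <;> ring
    · rw [abs_of_nonneg (by
        have : (j:ℝ) ≤ i := by exact_mod_cast h.le
        linarith : (0:ℝ) ≤ (i:ℝ) - j)]
      exact hpair j i h hi
  have hinj : Set.InjOn v ↑(Finset.range n) := by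
    intro i hi j hj hvij
    by_contra hne
    have hij : (0:ℝ) < |(i:ℝ) - j| :=
      abs_pos.mpr (sub_ne_zero.mpr (by exact_mod_cast hne))
    have := hpair' i j (Finset.mem_range.mp (Finset.mem_coe.mp hi))
      (Finset.mem_range.mp (Finset.mem_coe.mp hj)) hne
    rw [hvij, sub_self, norm_zero] at this
    nlinarith
  -- the polynomial
  set P : Polynomial ℂ := ∑ j ∈ Finset.range (N+1),
    if 1 ≤ j ∧ (j:ℝ)^2*π^2 ≤ l
    then Polynomial.C ((a j : ℂ) / (2*Complex.I)) * (Polynomial.X^(N+j) - Polynomial.X^(N-j))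
    else 0 with hPdef
  have hdeg : P.degree < ((Finset.range n).card : ℕ) := by
    rw [Finset.card_range]
    apply lt_of_le_of_lt (Polynomial.degree_sum_le _ _)
    rw [Finset.sup_lt_iff (by exact_mod_cast WithBot.bot_lt_coe n)]
    intro j hj
    rw [Finset.mem_range] at hj
    have hjle : j ≤ N := Nat.lt_succ_iff.mp hj
    by_cases hc : 1 ≤ j ∧ (j:ℝ)^2*π^2 ≤ l
    · rw [if_pos hc]
      refine lt_of_le_of_lt (Polynomial.degree_mul_le _ _) ?_
      refine lt_of_le_of_lt (add_le_add Polynomial.degree_C_le (Polynomial.degree_sub_le _ _)) ?_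
      rw [Polynomial.degree_X_pow, Polynomial.degree_X_pow, zero_add, max_lt_iff]
      constructor <;> · rw [Nat.cast_lt]; omega
    · rw [if_neg hc]
      exact lt_of_le_of_lt (Polynomial.degree_zero.le) (by exact_mod_cast WithBot.bot_lt_coe n)
  have heval : ∀ x : ℝ, P.eval (Complex.exp ((π * x : ℝ) * Complex.I)) =
      Complex.exp ((π * x : ℝ) * Complex.I)^N * (g x : ℂ) := by
    intro x
    set z : ℂ := Complex.exp ((π * x : ℝ) * Complex.I) with hz
    have hzk : ∀ k : ℕ, z^k = Complex.exp ((π * (k * x) : ℝ) * Complex.I) := by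
      intro k
      rw [hz, ← Complex.exp_nat_mul]
      congr 1
      push_cast
      ring
    have hrhs : (g x : ℂ) = ∑ j ∈ Finset.range (N+1),
        (if 1 ≤ j ∧ (j:ℝ)^2*π^2 ≤ l then (a j : ℂ) * Complex.sin (((j:ℝ)*π*x : ℝ):ℂ) else 0) := by
      rw [hgdef]
      push_cast
      apply Finset.sum_congr rfl
      intro j _
      rw [apply_ite (fun r : ℝ => (r : ℂ))]
      split_ifs with hc
      · push_cast
        ring
      · push_cast
        ring
    rw [hPdef, Polynomial.eval_finset_sum, hrhs, Finset.mul_sum]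
    apply Finset.sum_congr rfl
    intro j hj
    rw [Finset.mem_range] at hj
    have hjle : j ≤ N := Nat.lt_succ_iff.mp hj
    by_cases hc : 1 ≤ j ∧ (j:ℝ)^2*π^2 ≤ l
    · rw [if_pos hc, if_pos hc]
      rw [Polynomial.eval_mul, Polynomial.eval_C, Polynomial.eval_sub, Polynomial.eval_pow,
        Polynomial.eval_pow, Polynomial.eval_X]
      have hkey : z^(N+j) - z^(N-j) = z^N * (2*Complex.I*Complex.sin (((j:ℝ)*π*x : ℝ):ℂ)) := by
        rw [hzk (N+j), hzk (N-j), hzk N, ← two_I_sin (((j:ℝ)*π*x : ℝ):ℂ), mul_sub,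
          ← Complex.exp_add, ← Complex.exp_add]
        congr 2
        · push_cast; ring
        · push_cast [Nat.cast_sub hjle]; ring
      rw [hkey]
      have h2I : (2*Complex.I) ≠ 0 := by
        simp [Complex.I_ne_zero]
      field_simp
    · rw [if_neg hc, if_neg hc, Polynomial.eval_zero, mul_zero]
  -- Lagrange interpolation
  have hinterp := Lagrange.eq_interpolate (s := Finset.range n) (v := v) hinj hdeg
  have hnode : ∀ i, i < n → ‖P.eval (v i)‖ ≤ Real.sqrt c := by
    intro i hi
    have hv : v i = Complex.exp ((π * t i : ℝ) * Complex.I) := rfl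
    rw [hv, heval (t i), norm_mul, norm_pow, Complex.norm_exp_ofReal_mul_I, one_pow, one_mul,
      Complex.norm_real, Real.norm_eq_abs]
    have h2 := htc i hi
    calc |g (t i)| = Real.sqrt ((g (t i))^2) := (Real.sqrt_sq_eq_abs _).symm
    _ ≤ Real.sqrt c := Real.sqrt_le_sqrt h2
  have hbasis : ∀ w : ℂ, ‖w‖ = 1 → ∀ i ∈ Finset.range n,
      ‖(Lagrange.basis (Finset.range n) v i).eval w‖
        ≤ 2^(n-1) / (sep^(n-1) * ((n-1).factorial : ℝ)) := by
    intro w hw i hi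
    have hii : i < n := Finset.mem_range.mp hi
    rw [Lagrange.basis, Polynomial.eval_prod, norm_prod]
    have hle : ∀ j ∈ (Finset.range n).erase i,
        ‖(Lagrange.basisDivisor (v i) (v j)).eval w‖ ≤ (sep * |(i:ℝ) - j|)⁻¹ := by
      intro j hj
      obtain ⟨hne, hjr⟩ := Finset.mem_erase.mp hj
      have hji : j < n := Finset.mem_range.mp hjr
      have habsij : (0:ℝ) < |(i:ℝ) - j| :=
        abs_pos.mpr (sub_ne_zero.mpr (by exact_mod_cast (Ne.symm hne)))
      have hpij := hpair' i j hii hji (Ne.symm hne)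
      have habspos : 0 < ‖v i - v j‖ :=
        lt_of_lt_of_le (by positivity) hpij
      have hev : (Lagrange.basisDivisor (v i) (v j)).eval w = (v i - v j)⁻¹ * (w - v j) := by
        simp [Lagrange.basisDivisor]
      rw [hev, norm_mul, norm_inv]
      have h2 : ‖w - v j‖ ≤ 2 := by
        have htri : ‖w - v j‖ ≤ ‖w‖ + ‖v j‖ := norm_sub_le _ _
        rw [hw, hvabs j] at htri
        linarith
      have h3 : (‖v i - v j‖)⁻¹ ≤ (2*(sep*|(i:ℝ)-j|))⁻¹ :=
        inv_anti₀ (by positivity) hpij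
      calc (‖v i - v j‖)⁻¹ * ‖w - v j‖
          ≤ (2*(sep*|(i:ℝ)-j|))⁻¹ * 2 :=
            mul_le_mul h3 h2 (norm_nonneg _) (by positivity)
      _ = (sep * |(i:ℝ)-j|)⁻¹ := by
            rw [mul_inv]; ring
    have hcard : ((Finset.range n).erase i).card = n - 1 := by
      rw [Finset.card_erase_of_mem hi, Finset.card_range]
    have hprodpos : (0:ℝ) < ((n-1).factorial : ℝ)/2^(n-1) := by positivity
    calc ∏ j ∈ (Finset.range n).erase i,
          ‖(Lagrange.basisDivisor (v i) (v j)).eval w‖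
        ≤ ∏ j ∈ (Finset.range n).erase i, (sep * |(i:ℝ)-j|)⁻¹ :=
          Finset.prod_le_prod (fun j _ => norm_nonneg _) hle
    _ = (∏ j ∈ (Finset.range n).erase i, (sep * |(i:ℝ)-j|))⁻¹ := by
          rw [← Finset.prod_inv_distrib]
    _ = (sep^(n-1) * ∏ j ∈ (Finset.range n).erase i, |(i:ℝ)-j|)⁻¹ := by
          rw [Finset.prod_mul_distrib, Finset.prod_const, hcard]
    _ ≤ (sep^(n-1) * (((n-1).factorial : ℝ)/2^(n-1)))⁻¹ := by
          apply inv_anti₀ (by positivity)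
          exact mul_le_mul_of_nonneg_left (prod_dist_ge n i hii) (by positivity)
    _ = 2^(n-1) / (sep^(n-1) * ((n-1).factorial : ℝ)) := by
          have hA : sep^(n-1) ≠ 0 := by positivity
          have hF : ((n-1).factorial : ℝ) ≠ 0 := by positivity
          field_simp
  -- pointwise bound
  have hptw : ∀ x : ℝ, g x ^ 2 ≤ c * K^(2*n) := by
    intro x
    set w : ℂ := Complex.exp ((π * x : ℝ) * Complex.I) with hwdef
    have hwabs : ‖w‖ = 1 := Complex.norm_exp_ofReal_mul_I _
    have hgx : |g x| = ‖P.eval w‖ := by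
      rw [hwdef, heval x, norm_mul, norm_pow, Complex.norm_exp_ofReal_mul_I, one_pow, one_mul,
        Complex.norm_real, Real.norm_eq_abs]
    have hexpand : P.eval w = ∑ i ∈ Finset.range n,
        P.eval (v i) * (Lagrange.basis (Finset.range n) v i).eval w := by
      conv_lhs => rw [hinterp]
      rw [Lagrange.interpolate_apply, Polynomial.eval_finset_sum]
      apply Finset.sum_congr rfl
      intro i _
      rw [Polynomial.eval_mul, Polynomial.eval_C]
    have habs : ‖P.eval w‖ ≤ ∑ _i ∈ Finset.range n,
        Real.sqrt c * (2^(n-1) / (sep^(n-1) * ((n-1).factorial : ℝ))) := by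
      rw [hexpand]
      refine le_trans (norm_sum_le _ _) ?_
      apply Finset.sum_le_sum
      intro i hi
      rw [norm_mul]
      exact mul_le_mul (hnode i (Finset.mem_range.mp hi)) (hbasis w hwabs i hi)
        (norm_nonneg _) (Real.sqrt_nonneg c)
    rw [Finset.sum_const, Finset.card_range, nsmul_eq_mul] at habs
    have hD : (n:ℝ) * (2^(n-1) / (sep^(n-1) * ((n-1).factorial : ℝ))) ≤ K^n := by
      have hd := D_le m' hm0 hm1 n hn0
      have hsepeq : sep = m'/(4*(n:ℝ)) := by
        rw [hsepdef, div_div]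
        congr 1
        ring
      rw [hsepeq, hKdef]
      exact hd
    have hgb : |g x| ≤ Real.sqrt c * K^n := by
      rw [hgx]
      refine le_trans habs ?_
      calc (n:ℝ) * (Real.sqrt c * (2^(n-1) / (sep^(n-1) * ((n-1).factorial : ℝ))))
          = Real.sqrt c * ((n:ℝ) * (2^(n-1) / (sep^(n-1) * ((n-1).factorial : ℝ)))) := by ring
      _ ≤ Real.sqrt c * K^n := mul_le_mul_of_nonneg_left hD (Real.sqrt_nonneg c)
    calc g x ^ 2 = |g x|^2 := (sq_abs _).symm
    _ ≤ (Real.sqrt c * K^n)^2 := by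
        apply pow_le_pow_left₀ (abs_nonneg _) hgb
    _ = c * K^(2*n) := by
        rw [mul_pow, Real.sq_sqrt hc0, ← pow_mul]
        ring_nf
  -- integrate the pointwise bound
  have hIoo : (∫ x in Set.Ioo (0:ℝ) 1, g x ^ 2) ≤ c * K^(2*n) := by
    have hconst : IntegrableOn (fun _ : ℝ => c * K^(2*n)) (Set.Ioo (0:ℝ) 1) :=
      integrableOn_const (by simp [Real.volume_Ioo])
    have := setIntegral_mono_on hintIoo hconst measurableSet_Ioo (fun x _ => hptw x)
    have hmeas1 : (volume (Set.Ioo (0:ℝ) 1)).toReal = 1 := by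
      simp [Real.volume_Ioo]
    rwa [setIntegral_const, smul_eq_mul, Measure.real, hmeas1, one_mul] at this
  -- final numeric bound
  have hsqrt : l^((1:ℝ)/2) = Real.sqrt l := by
    rw [Real.sqrt_eq_rpow]
  have hcoef : 2/m' * K^(2*n) ≤ C * Real.exp (C * l^((1:ℝ)/2)) := by
    have hNle : (N:ℝ) ≤ Real.sqrt l / π := Nat.floor_le (by positivity)
    have hsl : 0 ≤ Real.sqrt l := Real.sqrt_nonneg l
    have h2n : 2*n = 4*N + 2 := by omega
    have hK4N : K^(4*N) ≤ Real.exp (C * Real.sqrt l) := by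
      rw [← Real.exp_log hK0, ← Real.exp_nat_mul]
      apply Real.exp_le_exp.mpr
      have h1 : ((4*N : ℕ):ℝ) * Real.log K ≤ (4*(Real.sqrt l/π)) * Real.log K := by
        apply mul_le_mul_of_nonneg_right _ hlogK.le
        push_cast
        have : (N:ℝ) ≤ Real.sqrt l / π := hNle
        linarith
      refine le_trans h1 ?_
      have h2 : Real.sqrt l / π ≤ Real.sqrt l := by
        rw [div_le_iff₀ hπ]
        nlinarith
      have h3 : (4*(Real.sqrt l/π)) * Real.log K ≤ 4*Real.sqrt l * Real.log K := by
        apply mul_le_mul_of_nonneg_right _ hlogK.le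
        linarith
      refine le_trans h3 ?_
      have h4 : 4 * Real.log K ≤ C := by
        rw [hCdef]
        have : 0 ≤ 2*K^2/m' := by positivity
        linarith
      nlinarith
    calc 2/m' * K^(2*n) = (2*K^2/m') * K^(4*N) := by
          rw [h2n, pow_add]
          ring
    _ ≤ (2*K^2/m') * Real.exp (C * Real.sqrt l) :=
          mul_le_mul_of_nonneg_left hK4N (by positivity)
    _ ≤ C * Real.exp (C * l^((1:ℝ)/2)) := by
          rw [hsqrt]
          apply mul_le_mul_of_nonneg_right _ (Real.exp_pos _).le
          rw [hCdef]
          linarith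
  have hfinal : c * K^(2*n) ≤ C * Real.exp (C * l^((1:ℝ)/2)) * ∫ x in G, g x ^ 2 := by
    calc c * K^(2*n) = (2/m' * K^(2*n)) * ∫ x in G, g x ^ 2 := by
          rw [hcdef]; ring
    _ ≤ (C * Real.exp (C * l^((1:ℝ)/2))) * ∫ x in G, g x ^ 2 :=
          mul_le_mul_of_nonneg_right hcoef hGint0
  exact le_trans hIoo hfinal
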